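/- Let 0 < x̲ < x̄ and 0 < y̲ < ȳ, let Ω = {(x, z₁) ∈ ℝ² : x̲ ≤ x ≤ x̄, x/ȳ ≤ z₁ ≤ x/y̲}, let f(x, z₁) = z₁²/x and h(x, z₁) = ((y̲ + ȳ)·z₁ − x)/(y̲·ȳ). Then h is the concave envelope of f on Ω: h is concave on Ω, f(x, z₁) ≤ h(x, z₁) for all (x, z₁) ∈ Ω, and for every function h̃ that is concave on Ω and satisfies f(x, z₁) ≤ h̃(x, z₁) for all (x, z₁) ∈ Ω, one has h(x, z₁) ≤ h̃(x, z₁) for all (x, z₁) ∈ Ω. -/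

import Mathlib

/-- `h (x, z₁) = ((y̲ + ȳ)·z₁ − x)/(y̲·ȳ)` is the concave envelope of
`f (x, z₁) = z₁²/x` on the quadrilateral `Ω`: it is concave on `Ω`, overestimates `f`
on `Ω`, and is below every concave overestimator of `f` on `Ω`. -/
theorem concave_envelope (xlo xhi ylo yhi : ℝ)
    (hxlo : 0 < xlo) (hx : xlo < xhi) (hylo : 0 < ylo) (hy : ylo < yhi) :
    let Ω : Set (ℝ × ℝ) :=
      {p : ℝ × ℝ | xlo ≤ p.1 ∧ p.1 ≤ xhi ∧ p.1 / yhi ≤ p.2 ∧ p.2 ≤ p.1 / ylo}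
    let f : ℝ × ℝ → ℝ := fun p => p.2 ^ 2 / p.1
    let h : ℝ × ℝ → ℝ := fun p => ((ylo + yhi) * p.2 - p.1) / (ylo * yhi)
    ConcaveOn ℝ Ω h ∧ (∀ p ∈ Ω, f p ≤ h p) ∧
      ∀ htilde : ℝ × ℝ → ℝ, ConcaveOn ℝ Ω htilde → (∀ p ∈ Ω, f p ≤ htilde p) →
        ∀ p ∈ Ω, h p ≤ htilde p := by
  intro Ω f h
  have hyhi : (0:ℝ) < yhi := hylo.trans hy
  have hΩconv : Convex ℝ Ω := by
    intro p hp q hq a b ha hb hab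
    obtain ⟨h1, h2, h3, h4⟩ := hp
    obtain ⟨g1, g2, g3, g4⟩ := hq
    rw [div_le_iff₀ hyhi] at h3 g3
    rw [le_div_iff₀ hylo] at h4 g4
    refine ⟨?_, ?_, ?_, ?_⟩ <;> simp only [Prod.smul_fst, Prod.smul_snd, Prod.fst_add,
      Prod.snd_add, smul_eq_mul, Set.mem_setOf_eq]
    · nlinarith
    · nlinarith
    · rw [div_le_iff₀ hyhi]; nlinarith
    · rw [le_div_iff₀ hylo]; nlinarith
  constructor
  · refine ⟨hΩconv, ?_⟩
    intro p _ q _ a b ha hb hab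
    apply le_of_eq
    simp only [h, Prod.smul_fst, Prod.smul_snd, Prod.fst_add, Prod.snd_add, smul_eq_mul]
    field_simp
    ring
  constructor
  · intro p hp
    obtain ⟨h1, h2, h3, h4⟩ := hp
    have hx1 : 0 < p.1 := hxlo.trans_le h1
    rw [div_le_iff₀ hyhi] at h3
    rw [le_div_iff₀ hylo] at h4
    simp only [f, h]
    rw [div_le_div_iff₀ hx1 (by positivity)]
    nlinarith [mul_nonneg (sub_nonneg.2 h4) (sub_nonneg.2 h3)]
  · intro ht htc htf p hp
    obtain ⟨h1, h2, h3, h4⟩ := hp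
    have hx1 : 0 < p.1 := hxlo.trans_le h1
    have h3' : p.1 ≤ yhi * p.2 := by rw [div_le_iff₀ hyhi] at h3; linarith
    have h4' : ylo * p.2 ≤ p.1 := by rw [le_div_iff₀ hylo] at h4; linarith
    set a : ℝ := ylo * (yhi * p.2 - p.1) / (p.1 * (yhi - ylo)) with ha_def
    have hd : 0 < p.1 * (yhi - ylo) := by nlinarith
    have ha : 0 ≤ a := by
      apply div_nonneg _ hd.le
      nlinarith
    have hb : 0 ≤ 1 - a := by
      rw [sub_nonneg, ha_def, div_le_one hd]
      nlinarith
    have hq1 : (p.1, p.1 / ylo) ∈ Ω := by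
      refine ⟨h1, h2, ?_, le_refl _⟩
      apply div_le_div_of_nonneg_left hx1.le hylo hy.le |>.trans_eq rfl
    have hq2 : (p.1, p.1 / yhi) ∈ Ω := by
      refine ⟨h1, h2, le_refl _, ?_⟩
      exact div_le_div_of_nonneg_left hx1.le hylo hy.le
    have hcomb : a • ((p.1, p.1 / ylo) : ℝ × ℝ) + (1 - a) • ((p.1, p.1 / yhi) : ℝ × ℝ) = p := by
      have : a * (p.1 / ylo) + (1 - a) * (p.1 / yhi) = p.2 := by
        rw [ha_def]; have := (sub_pos.2 hy).ne'; field_simp; ring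
      ext <;> simp [Prod.smul_fst, Prod.smul_snd, smul_eq_mul, this] <;> ring
    have key := htc.2 hq1 hq2 ha hb (by ring)
    rw [hcomb] at key
    have hf1 : f (p.1, p.1 / ylo) ≤ ht (p.1, p.1 / ylo) := htf _ hq1
    have hf2 : f (p.1, p.1 / yhi) ≤ ht (p.1, p.1 / yhi) := htf _ hq2
    have hval : h p = a * f (p.1, p.1 / ylo) + (1 - a) * f (p.1, p.1 / yhi) := by
      simp only [f, h, ha_def]
      have := (sub_pos.2 hy).ne'
      field_simp
      ring
    rw [hval]
    calc a * f (p.1, p.1 / ylo) + (1 - a) * f (p.1, p.1 / yhi)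
        ≤ a * ht (p.1, p.1 / ylo) + (1 - a) * ht (p.1, p.1 / yhi) := by
          gcongr
      _ ≤ ht p := key
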